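/- The map Exp : ℝ → (0,1), Exp(x) := e^{4x}/(1 + e^{4x}), is a group isomorphism from (ℝ, +) to the disparity group ((0,1), ∘): it is bijective onto (0,1) and satisfies Exp(x + y) = Exp(x) ∘ Exp(y) for all x, y ∈ ℝ. -/

import Mathlib

noncomputable def dop (x y : ℝ) : ℝ := x * y / (1 - x - y + 2 * x * y)

noncomputable def dExp (x : ℝ) : ℝ := Real.exp (4 * x) / (1 + Real.exp (4 * x))

lemma one_add_exp_pos (t : ℝ) : (0:ℝ) < 1 + Real.exp t := by positivity

lemma dExp_mem (x : ℝ) : dExp x ∈ Set.Ioo (0:ℝ) 1 := by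
  unfold dExp
  have h := Real.exp_pos (4 * x)
  have h1 := one_add_exp_pos (4 * x)
  constructor
  · positivity
  · rw [div_lt_one h1]; linarith

theorem dExp_iso :
    Set.BijOn dExp Set.univ (Set.Ioo (0:ℝ) 1) ∧
    (∀ x y : ℝ, dExp (x + y) = dop (dExp x) (dExp y)) := by
  constructor
  · refine ⟨fun x _ => dExp_mem x, ?_, ?_⟩
    · intro x _ y _ hxy
      unfold dExp at hxy
      have h1 := one_add_exp_pos (4 * x)
      have h2 := one_add_exp_pos (4 * y)
      have : Real.exp (4 * x) = Real.exp (4 * y) := by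
        field_simp at hxy; linarith
      have := Real.exp_injective this
      linarith
    · intro y hy
      obtain ⟨hy0, hy1⟩ := hy
      refine ⟨Real.log (y / (1 - y)) / 4, trivial, ?_⟩
      unfold dExp
      have h1 : (0:ℝ) < 1 - y := by linarith
      have he : Real.exp (4 * (Real.log (y / (1 - y)) / 4)) = y / (1 - y) := by
        rw [show 4 * (Real.log (y / (1 - y)) / 4) = Real.log (y / (1 - y)) by ring]
        exact Real.exp_log (by positivity)
      rw [he]
      field_simp
      ring
  · intro x y
    unfold dExp dop
    have hx := Real.exp_pos (4 * x)
    have hy := Real.exp_pos (4 * y)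
    have h1 := one_add_exp_pos (4 * x)
    have h2 := one_add_exp_pos (4 * y)
    have hxy : Real.exp (4 * (x + y)) = Real.exp (4 * x) * Real.exp (4 * y) := by
      rw [← Real.exp_add]; ring_nf
    set a := Real.exp (4 * x)
    set b := Real.exp (4 * y)
    rw [hxy]
    have hden : 1 - a / (1 + a) - b / (1 + b) + 2 * (a / (1 + a)) * (b / (1 + b))
        = (1 + a * b) / ((1 + a) * (1 + b)) := by
      field_simp; ring
    rw [hden]
    have hab : (0:ℝ) < 1 + a * b := by positivity
    field_simp
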